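/- In a complex of Construction 4 with n = 3k+1 or 3k+2 and k ≥ 2, every empty cluster (a set of more than n/3 vertices containing no triangle, maximal with this property) has vertices in exactly two columns; moreover in each of its two columns, all of its vertices except possibly the lowest share a single color; and if both columns contain at least two vertices of the cluster, then the left column's color is red and the right column's color is blue. -/

import Mathlib

/-- The missing-triangle predicate of Construction 1, applied to triples `z < y < x`:
`col v` is the (cyclic) column of `v` (the column to the right of `c` is `c + 1`, the
column to the left is `c + 2`); `red v = true` means red, `false` means blue.  The four
types are: (1) three vertices in one column with the top two the same color; (2) two
vertices in one column with the higher red, one vertex in the column to its right;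
(3) two vertices in one column with the higher blue, one vertex in the column to its
left; (4) two vertices in one column and one in another, the highest vertex in the left
column involved blue, the highest in the right column involved red, the two lowest in
the same column. -/
def MissingTriple {α : Type*} (col : α → Fin 3) (red : α → Bool) (x y z : α) : Prop :=
  (col x = col y ∧ col y = col z ∧ red x = red y) ∨
  ((col x = col y ∧ col z = col x + 1 ∧ red x = true) ∨
   (col x = col z ∧ col y = col x + 1 ∧ red x = true) ∨
   (col y = col z ∧ col x = col y + 1 ∧ red y = true)) ∨
  ((col x = col y ∧ col z = col x + 2 ∧ red x = false) ∨
   (col x = col z ∧ col y = col x + 2 ∧ red x = false) ∨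
   (col y = col z ∧ col x = col y + 2 ∧ red y = false)) ∨
  (col y = col z ∧ col x ≠ col y ∧
    ((col x = col y + 1 ∧ red y = false ∧ red x = true) ∨
     (col y = col x + 1 ∧ red x = false ∧ red y = true)))

/-- Construction 3: `n` vertices arranged in 3 columns and `⌈n/3⌉` rows (rows indexed
from the bottom, row `i`, column `c` is the pair `(i, c)`), with all spots below the
top row occupied, a total order on the vertices (given by the rank function `ord`)
refining the row order, and a red/blue coloring.  The faces are as in Construction 1:
all vertices, all edges, and all triples except the missing triangles. -/
structure Cons3 (n : ℕ) where
  /-- The occupied positions (the vertices). -/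
  V : Finset (ℕ × Fin 3)
  /-- The coloring: `true` = red, `false` = blue. -/
  red : ℕ × Fin 3 → Bool
  /-- The rank of a vertex in the total order. -/
  ord : ℕ × Fin 3 → ℕ
  card_V : V.card = n
  mem_rows : ∀ p ∈ V, p.1 < (n + 2) / 3
  full : ∀ i, i + 1 < (n + 2) / 3 → ∀ c, (i, c) ∈ V
  ord_inj : ∀ p ∈ V, ∀ q ∈ V, ord p = ord q → p = q
  ord_row : ∀ p ∈ V, ∀ q ∈ V, p.1 < q.1 → ord p < ord q

namespace Cons3

variable {n : ℕ} (C : Cons3 n)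

/-- `p` is lower than `q` in the total order. -/
def lt (p q : ℕ × Fin 3) : Prop := C.ord p < C.ord q

/-- A 3-set of vertices is a triangle of the complex iff it is not a missing triple. -/
def IsTriangleOf (s : Finset (ℕ × Fin 3)) : Prop :=
  ∃ x y z : ℕ × Fin 3, C.lt z y ∧ C.lt y x ∧ s = {x, y, z} ∧
    ¬ MissingTriple Prod.snd C.red x y z

open Classical in
/-- The number of triangles of the complex. -/
noncomputable def numTriangles : ℕ :=
  ((C.V.powersetCard 3).filter fun s => C.IsTriangleOf s).card

/-- The color set of column `c`: the red vertices of column `c` together with the blue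
vertices of the column `c + 1` to its right. -/
def colorSet (c : Fin 3) : Finset (ℕ × Fin 3) :=
  C.V.filter fun p => (p.2 = c ∧ C.red p = true) ∨ (p.2 = c + 1 ∧ C.red p = false)

/-- The part of the color set of column `c` remaining after the bottom `j` rows are
removed. -/
def colorSetAbove (j : ℕ) (c : Fin 3) : Finset (ℕ × Fin 3) :=
  (C.colorSet c).filter fun p => j ≤ p.1

/-- The number of red vertices of column `c` among the top `j` rows. -/
def redTop (j : ℕ) (c : Fin 3) : ℕ :=
  (C.V.filter fun p => p.2 = c ∧ C.red p = true ∧ (n + 2) / 3 ≤ p.1 + j).card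

/-- The coloring conditions of Construction 4.  If `n = 3k`, every row is
monochromatic.  If `n = 3k + 1`, for every `j ≤ k`, restricting to the top `j` rows,
each column has at most as many red vertices as the column to its left (`c + 2`),
except that the column `c₀` containing the top vertex may have one more.  If
`n = 3k + 2`, for every `j ≤ k`, restricting to the top `j` rows, each column has at
least as many red vertices as the column to its left, except that the column `cₑ`
without a vertex in the top row may have one fewer. -/
def Cond4 : Prop :=
  if n % 3 = 0 then
    ∀ p ∈ C.V, ∀ q ∈ C.V, p.1 = q.1 → C.red p = C.red q
  else if n % 3 = 1 then
    ∃ c₀ : Fin 3, ((n + 2) / 3 - 1, c₀) ∈ C.V ∧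
      (∀ c, c ≠ c₀ → ((n + 2) / 3 - 1, c) ∉ C.V) ∧
      ∀ j ≤ n / 3, ∀ c : Fin 3,
        C.redTop j c ≤ C.redTop j (c + 2) + (if c = c₀ then 1 else 0)
  else
    ∃ cₑ : Fin 3, ((n + 2) / 3 - 1, cₑ) ∉ C.V ∧
      (∀ c, c ≠ cₑ → ((n + 2) / 3 - 1, c) ∈ C.V) ∧
      ∀ j ≤ n / 3, ∀ c : Fin 3,
        C.redTop j (c + 2) ≤ C.redTop j c + (if c = cₑ then 1 else 0)

/-- An empty cluster: a set of more than one third of the vertices containing no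
triangle of the complex, any proper superset of which (within the vertex set) contains
a triangle. -/
def EmptyCluster (S : Finset (ℕ × Fin 3)) : Prop :=
  S ⊆ C.V ∧ n < 3 * S.card ∧
    (∀ x ∈ S, ∀ y ∈ S, ∀ z ∈ S, C.lt z y → C.lt y x →
      MissingTriple Prod.snd C.red x y z) ∧
    ∀ v ∈ C.V, v ∉ S →
      ∃ x ∈ insert v S, ∃ y ∈ insert v S, ∃ z ∈ insert v S,
        C.lt z y ∧ C.lt y x ∧ ¬ MissingTriple Prod.snd C.red x y z

/-- An empty core: an intersection of one or more empty clusters of a common size `m`,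
containing at least two vertices, such that any other empty cluster of size at least
`m` contains at most one of its vertices. -/
def EmptyCore (E : Finset (ℕ × Fin 3)) : Prop :=
  ∃ m : ℕ, ∃ 𝒮 : Finset (Finset (ℕ × Fin 3)), ∃ h𝒮 : 𝒮.Nonempty,
    (∀ S ∈ 𝒮, C.EmptyCluster S ∧ S.card = m) ∧
    E = 𝒮.inf' h𝒮 id ∧ 2 ≤ E.card ∧
    ∀ S', C.EmptyCluster S' → m ≤ S'.card → S' ∉ 𝒮 → (S' ∩ E).card ≤ 1

/-- The first exceptional construction: `n = 3k + 1` and the unique blue vertex is in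
the second row from the top, in the column `c₀` containing the top vertex, and higher
than the red vertex to its right. -/
def Exceptional1 : Prop :=
  n % 3 = 1 ∧ ∃ p ∈ C.V, C.red p = false ∧ (∀ q ∈ C.V, C.red q = false → q = p) ∧
    ∃ c₀ : Fin 3, ((n + 2) / 3 - 1, c₀) ∈ C.V ∧ p.1 + 2 = (n + 2) / 3 ∧ p.2 = c₀ ∧
      C.lt (p.1, c₀ + 1) p

/-- The second exceptional construction: `n = 3k + 2` and all vertices outside the top
row are blue. -/
def Exceptional2 : Prop :=
  n % 3 = 2 ∧ ∀ p ∈ C.V, p.1 + 1 < (n + 2) / 3 → C.red p = false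

end Cons3

section AuxEmptySetTypes

private def MT (x y z : Fin 3 × Bool) : Prop := MissingTriple Prod.fst Prod.snd x y z

private instance (x y z : Fin 3 × Bool) : Decidable (MT x y z) := by
  unfold MT MissingTriple; infer_instance

private lemma fin1 : ∀ a : Fin 3, a + 1 ≠ a := by decide
private lemma fin2 : ∀ a : Fin 3, a + 2 ≠ a := by decide
private lemma L1 : ∀ (a : Fin 3) (rx ry rz : Bool), MT (a, rx) (a, ry) (a, rz) → rx = ry := by decide
private lemma L2 : ∀ (a b c : Fin 3) (rx ry rz : Bool), MT (a, rx) (b, ry) (c, rz) → a = b ∨ a = c ∨ b = c := by decide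
private lemma L3 : ∀ (a : Fin 3) (rx ry rz : Bool), MT (a, rx) (a, ry) (a + 1, rz) → rx = true := by decide
private lemma L4 : ∀ (a : Fin 3) (rx ry rz : Bool), MT (a, rx) (a + 1, ry) (a, rz) → rx = true := by decide
private lemma L5 : ∀ (a : Fin 3) (rx ry rz : Bool), MT (a + 1, rx) (a + 1, ry) (a, rz) → rx = false := by decide
private lemma L6 : ∀ (a : Fin 3) (rx ry rz : Bool), MT (a + 1, rx) (a, ry) (a, rz) → ry = true ∨ rx = true := by decide
private lemma L8 : ∀ (a : Fin 3) (rx ry rz : Bool), MT (a + 1, rx) (a, ry) (a + 1, rz) → rx = false := by decide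
private lemma L9 : ∀ (a : Fin 3) (rx ry rz : Bool), MT (a, rx) (a + 1, ry) (a + 1, rz) → ry = false ∨ rx = false := by decide
private lemma Ma : ∀ (a : Fin 3) (r s : Bool), MT (a, true) (a, r) (a + 1, s) := by decide
private lemma Mb : ∀ (a : Fin 3) (r s : Bool), MT (a, true) (a + 1, r) (a, s) := by decide
private lemma Mc : ∀ (a : Fin 3) (r s : Bool), MT (a + 1, s) (a, true) (a, r) := by decide
private lemma Md : ∀ (a : Fin 3) (r s : Bool), MT (a, false) (a, r) (a + 2, s) := by decide
private lemma Me : ∀ (a : Fin 3) (r s : Bool), MT (a, false) (a + 2, s) (a, r) := by decide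
private lemma Mf : ∀ (a : Fin 3) (r s : Bool), MT (a + 2, s) (a, false) (a, r) := by decide

end AuxEmptySetTypes

/-- Lemma `emptysettypes`: in a complex of Construction 4 with `n = 3k + 1` or
`n = 3k + 2` vertices and `k ≥ 2`, every empty cluster `S` has vertices in exactly two
columns; in each of its two columns all of its vertices except possibly the lowest
share one color; and if both columns contain at least two vertices of `S`, then the
left column's color is red and the right column's color is blue. -/
theorem emptysettypes (n k : ℕ) (hk : 2 ≤ k) (hn : n = 3 * k + 1 ∨ n = 3 * k + 2)
    (C : Cons3 n) (h4 : C.Cond4) (S : Finset (ℕ × Fin 3)) (hS : C.EmptyCluster S) :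
    (∃ c₁ c₂ : Fin 3, c₁ ≠ c₂ ∧ (∀ p ∈ S, p.2 = c₁ ∨ p.2 = c₂) ∧
        (∃ p ∈ S, p.2 = c₁) ∧ (∃ p ∈ S, p.2 = c₂)) ∧
      (∀ c : Fin 3, ∃ b : Bool, ∀ p ∈ S, p.2 = c →
        (∃ q ∈ S, q.2 = c ∧ C.lt q p) → C.red p = b) ∧
      (∀ c : Fin 3,
        2 ≤ (S.filter fun p => p.2 = c).card →
        2 ≤ (S.filter fun p => p.2 = c + 1).card →
          (∀ p ∈ S, p.2 = c → (∃ q ∈ S, q.2 = c ∧ C.lt q p) → C.red p = true) ∧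
          (∀ p ∈ S, p.2 = c + 1 → (∃ q ∈ S, q.2 = c + 1 ∧ C.lt q p) →
            C.red p = false)) := by
  obtain ⟨hSV, hcard, hmiss, hmax⟩ := hS
  have hS3 : 3 ≤ S.card := by rcases hn with h | h <;> omega
  have hk1 : (n + 2) / 3 = k + 1 := by rcases hn with h | h <;> omega
  have htot : ∀ p ∈ S, ∀ q ∈ S, p ≠ q → C.lt p q ∨ C.lt q p := by
    intro p hp q hq hne
    rcases Nat.lt_trichotomy (C.ord p) (C.ord q) with h1 | h1 | h1
    · exact Or.inl h1
    · exact absurd (C.ord_inj p (hSV hp) q (hSV hq) h1) hne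
    · exact Or.inr h1
  have hMT : ∀ x ∈ S, ∀ y ∈ S, ∀ z ∈ S, C.lt z y → C.lt y x →
      MT (x.2, C.red x) (y.2, C.red y) (z.2, C.red z) := fun x hx y hy z hz h1 h2 =>
    hmiss x hx y hy z hz h1 h2
  have hpair : ∀ p ∈ S, ∀ q ∈ S, ∀ r ∈ S, p ≠ q → p ≠ r → q ≠ r →
      p.2 = q.2 ∨ p.2 = r.2 ∨ q.2 = r.2 := by
    intro p hp q hq r hr hpq hpr hqr
    rcases htot p hp q hq hpq with h1 | h1 <;>
      rcases htot p hp r hr hpr with h2 | h2 <;>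
        rcases htot q hq r hr hqr with h3 | h3
    · rcases L2 _ _ _ _ _ _ (hMT r hr q hq p hp h1 h3) with h | h | h <;> simp [h]
    · rcases L2 _ _ _ _ _ _ (hMT q hq r hr p hp h2 h3) with h | h | h <;> simp [h]
    · exact absurd (Nat.lt_trans (Nat.lt_trans h1 h3) h2) (Nat.lt_irrefl _)
    · rcases L2 _ _ _ _ _ _ (hMT q hq p hp r hr h2 h1) with h | h | h <;> simp [h]
    · rcases L2 _ _ _ _ _ _ (hMT r hr p hp q hq h1 h2) with h | h | h <;> simp [h]
    · exact absurd (Nat.lt_trans (Nat.lt_trans h2 h3) h1) (Nat.lt_irrefl _)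
    · rcases L2 _ _ _ _ _ _ (hMT p hp r hr q hq h3 h2) with h | h | h <;> simp [h]
    · rcases L2 _ _ _ _ _ _ (hMT p hp q hq r hr h3 h1) with h | h | h <;> simp [h]
  have hne : ∀ {x y : ℕ × Fin 3}, C.lt y x → y ≠ x := by
    intro x y h he; rw [he] at h; exact Nat.lt_irrefl _ h
  have honecol : ∀ c : Fin 3, ¬ ∀ p ∈ S, p.2 = c := by
    intro c hc
    obtain ⟨p1, hp1⟩ : S.Nonempty := Finset.card_pos.mp (by omega)
    obtain ⟨p2, hp2, hp12⟩ := Finset.exists_mem_ne (by omega : 1 < S.card) p1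
    obtain ⟨p0, hp0, q0, hq0, hlt0⟩ : ∃ p ∈ S, ∃ q ∈ S, C.lt q p := by
      rcases htot p2 hp2 p1 hp1 hp12 with h | h
      · exact ⟨p1, hp1, p2, hp2, h⟩
      · exact ⟨p2, hp2, p1, hp1, h⟩
    have hbcol : ∀ p ∈ S, ∀ q ∈ S, C.lt q p → C.red p = C.red p0 := by
      intro p hp q hq hqp
      by_cases hpe : p = p0
      · rw [hpe]
      · rcases htot p hp p0 hp0 hpe with h | h
        · have hmt := hMT p0 hp0 p hp q hq hqp h
          rw [hc p0 hp0, hc p hp, hc q hq] at hmt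
          exact (L1 _ _ _ _ hmt).symm
        · have hmt := hMT p hp p0 hp0 q0 hq0 hlt0 h
          rw [hc p0 hp0, hc p hp, hc q0 hq0] at hmt
          exact L1 _ _ _ _ hmt
    by_cases hbv : C.red p0 = true
    · obtain ⟨x, hx, y, hy, z, hz, hzy, hyx, hnm⟩ :=
        hmax (0, c + 1) (C.full 0 (by omega) (c + 1)) (fun h => fin1 c (hc _ h))
      have hzx : C.lt z x := Nat.lt_trans hzy hyx
      rw [Finset.mem_insert] at hx hy hz
      apply hnm
      show MT (x.2, C.red x) (y.2, C.red y) (z.2, C.red z)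
      rcases hx with hxv | hxS
      · have hyS : y ∈ S := by
          rcases hy with hyv | h
          · exact absurd (hyv.trans hxv.symm) (hne hyx)
          · exact h
        have hzS : z ∈ S := by
          rcases hz with hzv | h
          · exact absurd (hzv.trans hxv.symm) (hne hzx)
          · exact h
        rw [hxv, hc y hyS, hc z hzS, hbcol y hyS z hzS hzy, hbv]
        exact Mc c (C.red z) (C.red (0, c + 1))
      rcases hy with hyv | hyS
      · have hzS : z ∈ S := by
          rcases hz with hzv | h
          · exact absurd (hzv.trans hyv.symm) (hne hzy)
          · exact h
        rw [hyv, hc x hxS, hc z hzS, hbcol x hxS z hzS hzx, hbv]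
        exact Mb c (C.red (0, c + 1)) (C.red z)
      rcases hz with hzv | hzS
      · rw [hzv, hc x hxS, hc y hyS, hbcol x hxS y hyS hyx, hbv]
        exact Ma c (C.red y) (C.red (0, c + 1))
      · exact hmiss x hxS y hyS z hzS hzy hyx
    · rw [Bool.not_eq_true] at hbv
      obtain ⟨x, hx, y, hy, z, hz, hzy, hyx, hnm⟩ :=
        hmax (0, c + 2) (C.full 0 (by omega) (c + 2)) (fun h => fin2 c (hc _ h))
      have hzx : C.lt z x := Nat.lt_trans hzy hyx
      rw [Finset.mem_insert] at hx hy hz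
      apply hnm
      show MT (x.2, C.red x) (y.2, C.red y) (z.2, C.red z)
      rcases hx with hxv | hxS
      · have hyS : y ∈ S := by
          rcases hy with hyv | h
          · exact absurd (hyv.trans hxv.symm) (hne hyx)
          · exact h
        have hzS : z ∈ S := by
          rcases hz with hzv | h
          · exact absurd (hzv.trans hxv.symm) (hne hzx)
          · exact h
        rw [hxv, hc y hyS, hc z hzS, hbcol y hyS z hzS hzy, hbv]
        exact Mf c (C.red z) (C.red (0, c + 2))
      rcases hy with hyv | hyS
      · have hzS : z ∈ S := by
          rcases hz with hzv | h
          · exact absurd (hzv.trans hyv.symm) (hne hzy)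
          · exact h
        rw [hyv, hc x hxS, hc z hzS, hbcol x hxS z hzS hzx, hbv]
        exact Me c (C.red z) (C.red (0, c + 2))
      rcases hz with hzv | hzS
      · rw [hzv, hc x hxS, hc y hyS, hbcol x hxS y hyS hyx, hbv]
        exact Md c (C.red y) (C.red (0, c + 2))
      · exact hmiss x hxS y hyS z hzS hzy hyx
  refine ⟨?_, ?_, ?_⟩
  · obtain ⟨p₀, hp₀⟩ : S.Nonempty := Finset.card_pos.mp (by omega)
    have h1 := honecol p₀.2
    push_neg at h1
    obtain ⟨p₁, hp₁, hne₁⟩ := h1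
    refine ⟨p₀.2, p₁.2, fun h => hne₁ h.symm, ?_, ⟨p₀, hp₀, rfl⟩, ⟨p₁, hp₁, rfl⟩⟩
    intro p hp
    by_contra hcon
    push_neg at hcon
    rcases hpair p hp p₀ hp₀ p₁ hp₁ (fun h => hcon.1 (congrArg Prod.snd h))
      (fun h => hcon.2 (congrArg Prod.snd h))
      (fun h => hne₁ (congrArg Prod.snd h).symm) with h | h | h
    · exact hcon.1 h
    · exact hcon.2 h
    · exact hne₁ h.symm
  · intro c
    by_cases hex : ∃ p ∈ S, p.2 = c ∧ ∃ q ∈ S, q.2 = c ∧ C.lt q p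
    · obtain ⟨p', hp', hpc', q', hq', hqc', hlt'⟩ := hex
      refine ⟨C.red p', ?_⟩
      rintro p hp hpc ⟨q, hq, hqc, hqp⟩
      by_cases he : p = p'
      · rw [he]
      · rcases htot p hp p' hp' he with h | h
        · have hmt := hMT p' hp' p hp q hq hqp h
          rw [hpc', hpc, hqc] at hmt
          exact (L1 _ _ _ _ hmt).symm
        · have hmt := hMT p hp p' hp' q' hq' hlt' h
          rw [hpc', hpc, hqc'] at hmt
          exact L1 _ _ _ _ hmt
    · exact ⟨true, fun p hp hpc hq => absurd ⟨p, hp, hpc, hq⟩ hex⟩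
  · intro c h2c h2c1
    have get2 : ∀ d : Fin 3, 2 ≤ (S.filter fun p => p.2 = d).card →
        ∃ r1, r1 ∈ S ∧ r1.2 = d ∧ ∃ r2, r2 ∈ S ∧ r2.2 = d ∧ C.lt r1 r2 := by
      intro d hcard2
      obtain ⟨r, hr⟩ : (S.filter fun p => p.2 = d).Nonempty := Finset.card_pos.mp (by omega)
      obtain ⟨r', hr', hne'⟩ := Finset.exists_mem_ne (s := S.filter fun p => p.2 = d) (by omega) r
      rw [Finset.mem_filter] at hr hr'
      rcases htot r' hr'.1 r hr.1 hne' with h | h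
      · exact ⟨r', hr'.1, hr'.2, r, hr.1, hr.2, h⟩
      · exact ⟨r, hr.1, hr.2, r', hr'.1, hr'.2, h⟩
    obtain ⟨r1, hr1S, hr1c, r2, hr2S, hr2c, hr12⟩ := get2 (c + 1) h2c1
    obtain ⟨s1, hs1S, hs1c, s2, hs2S, hs2c, hs12⟩ := get2 c h2c
    constructor
    · rintro p hp hpc ⟨q, hq, hqc, hqp⟩
      have hpr1 : p ≠ r1 := by
        intro h; rw [h, hr1c] at hpc; exact fin1 c hpc
      rcases htot p hp r1 hr1S hpr1 with hpr | hrp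
      · have h5 := hMT r2 hr2S r1 hr1S p hp hpr hr12
        rw [hr1c, hr2c, hpc] at h5
        have hr2f := L5 _ _ _ _ h5
        have h6 := hMT r2 hr2S p hp q hq hqp (Nat.lt_trans hpr hr12)
        rw [hr2c, hpc, hqc] at h6
        rcases L6 _ _ _ _ h6 with h | h
        · exact h
        · rw [hr2f] at h; exact absurd h (by simp)
      · rcases htot q hq r1 hr1S
            (by intro h; rw [h, hr1c] at hqc; exact fin1 c hqc) with hq1 | h1q
        · have h4 := hMT p hp r1 hr1S q hq hq1 hrp
          rw [hpc, hr1c, hqc] at h4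
          exact L4 _ _ _ _ h4
        · have h3 := hMT p hp q hq r1 hr1S h1q hqp
          rw [hpc, hqc, hr1c] at h3
          exact L3 _ _ _ _ h3
    · rintro p hp hpc ⟨q, hq, hqc, hqp⟩
      have hps1 : p ≠ s1 := by
        intro h; rw [h, hs1c] at hpc; exact fin1 c hpc.symm
      rcases htot p hp s1 hs1S hps1 with hps | hsp
      · have h5 := hMT s2 hs2S s1 hs1S p hp hps hs12
        rw [hs1c, hs2c, hpc] at h5
        have hs2t := L3 _ _ _ _ h5
        have h6 := hMT s2 hs2S p hp q hq hqp (Nat.lt_trans hps hs12)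
        rw [hs2c, hpc, hqc] at h6
        rcases L9 _ _ _ _ h6 with h | h
        · exact h
        · rw [hs2t] at h; exact absurd h (by simp)
      · rcases htot q hq s1 hs1S
            (by intro h; rw [h, hs1c] at hqc; exact fin1 c hqc.symm) with hq1 | h1q
        · have h4 := hMT p hp s1 hs1S q hq hq1 hsp
          rw [hpc, hs1c, hqc] at h4
          exact L8 _ _ _ _ h4
        · have h3 := hMT p hp q hq s1 hs1S h1q hqp
          rw [hpc, hqc, hs1c] at h3
          exact L5 _ _ _ _ h3
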